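/- Let H be a real Hilbert space and let L : ℝ → B(H) be a continuously differentiable family of bounded self-adjoint operators. Assume: (H1) there exist K > 0 and α > 0 such that ⟨L(k)U, U⟩ ≥ α‖U‖² for all U whenever |k| ≥ K; (H2) for every k ≠ 0, L(k) = T_k + C_k with T_k self-adjoint and coercive and C_k compact; (H3) for all k₁ ≥ k₂ ≥ 0 and all U, ⟨L(k₁)U, U⟩ ≥ ⟨L(k₂)U, U⟩, and if k > 0, U ≠ 0 and L(k)U = 0 then ⟨L'(k)U, U⟩ > 0; (H4) there exist λ > 0 and φ₀ ≠ 0 with L(0)φ₀ = −λφ₀ and ⟨L(0)U, U⟩ ≥ 0 for all U ⊥ φ₀. Then there exists k₀ > 0 such that L(k₀) is nonnegative (⟨L(k₀)U, U⟩ ≥ 0 for all U ∈ H) and the kernel of L(k₀) is exactly one-dimensional. -/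

import Mathlib

open RealInnerProductSpace

lemma nonneg_form_cauchy_schwarz
    {H : Type*} [NormedAddCommGroup H] [InnerProductSpace ℝ H]
    (A : H →L[ℝ] H) (hsym : ∀ U V : H, ⟪A U, V⟫ = ⟪U, A V⟫)
    (hpos : ∀ U : H, 0 ≤ ⟪A U, U⟫) (U V : H) :
    ⟪A U, V⟫ ^ 2 ≤ ⟪A U, U⟫ * ⟪A V, V⟫ := by
  have h : ∀ t : ℝ, 0 ≤ ⟪A V, V⟫ * (t * t) + (2 * ⟪A U, V⟫) * t + ⟪A U, U⟫ := by
    intro t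
    have h0 := hpos (U + t • V)
    have hVU : ⟪A V, U⟫ = ⟪A U, V⟫ := by
      rw [hsym V U, real_inner_comm]
    simp only [map_add, map_smul, inner_add_left, inner_add_right, real_inner_smul_left,
      real_inner_smul_right] at h0
    rw [hVU] at h0
    nlinarith [h0]
  have := discrim_le_zero h
  rw [discrim] at this
  nlinarith [this]

lemma nonneg_form_norm_sq_le
    {H : Type*} [NormedAddCommGroup H] [InnerProductSpace ℝ H]
    (A : H →L[ℝ] H) (hsym : ∀ U V : H, ⟪A U, V⟫ = ⟪U, A V⟫)
    (hpos : ∀ U : H, 0 ≤ ⟪A U, U⟫) (U : H) :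
    ‖A U‖ ^ 2 ≤ ‖A‖ * ⟪A U, U⟫ := by
  rcases eq_or_ne (A U) 0 with h | h
  · simp [h]
  · have h1 := nonneg_form_cauchy_schwarz A hsym hpos U (A U)
    have h2 : ⟪A (A U), A U⟫ ≤ ‖A‖ * ‖A U‖ * ‖A U‖ := by
      calc ⟪A (A U), A U⟫ ≤ ‖A (A U)‖ * ‖A U‖ := real_inner_le_norm _ _
        _ ≤ (‖A‖ * ‖A U‖) * ‖A U‖ := by
            gcongr
            exact A.le_opNorm _
        _ = ‖A‖ * ‖A U‖ * ‖A U‖ := by ring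
    have h3 : ⟪A U, A U⟫ = ‖A U‖ ^ 2 := real_inner_self_eq_norm_sq _
    have h4 : 0 < ‖A U‖ := norm_pos_iff.2 h
    have h5 := hpos U
    have h6 : ⟪A (A U), A U⟫ * ⟪A U, U⟫ ≤ ‖A‖ * ‖A U‖ * ‖A U‖ * ⟪A U, U⟫ :=
      mul_le_mul_of_nonneg_right h2 h5
    nlinarith [h1, h3, h6, mul_pos h4 h4, sq_nonneg (‖A U‖ * ‖A U‖)]

/-- Key intermediate step of the paper: there is a first parameter `k₀ > 0` at which
`L(k₀)` is nonnegative and its kernel is exactly one-dimensional. -/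
theorem exists_parameter_with_one_dimensional_kernel
    {H : Type*} [NormedAddCommGroup H] [InnerProductSpace ℝ H] [CompleteSpace H]
    (L : ℝ → H →L[ℝ] H)
    (hL : ContDiff ℝ 1 L)
    (hsym : ∀ (k : ℝ) (U V : H), ⟪L k U, V⟫ = ⟪U, L k V⟫)
    -- (H1)
    (H1 : ∃ K > (0 : ℝ), ∃ α > (0 : ℝ), ∀ k : ℝ, K ≤ |k| →
      ∀ U : H, α * ‖U‖ ^ 2 ≤ ⟪L k U, U⟫)
    -- (H2)
    (H2 : ∀ k : ℝ, k ≠ 0 → ∃ T C : H →L[ℝ] H, L k = T + C ∧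
      (∀ U V : H, ⟪T U, V⟫ = ⟪U, T V⟫) ∧
      (∃ c > (0 : ℝ), ∀ U : H, c * ‖U‖ ^ 2 ≤ ⟪T U, U⟫) ∧
      IsCompactOperator C)
    -- (H3)
    (H3mono : ∀ k₁ k₂ : ℝ, 0 ≤ k₂ → k₂ ≤ k₁ →
      ∀ U : H, ⟪L k₂ U, U⟫ ≤ ⟪L k₁ U, U⟫)
    (H3ker : ∀ k : ℝ, 0 < k → ∀ U : H, U ≠ 0 → L k U = 0 →
      0 < ⟪deriv L k U, U⟫)
    -- (H4)
    (H4 : ∃ (lam : ℝ) (φ₀ : H), 0 < lam ∧ φ₀ ≠ 0 ∧ L 0 φ₀ = (-lam) • φ₀ ∧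
      ∀ U : H, ⟪U, φ₀⟫ = 0 → 0 ≤ ⟪L 0 U, U⟫) :
    ∃ k₀ : ℝ, 0 < k₀ ∧ (∀ U : H, 0 ≤ ⟪L k₀ U, U⟫) ∧
      Module.finrank ℝ (LinearMap.ker (L k₀ : H →ₗ[ℝ] H)) = 1 := by
  classical
  obtain ⟨K, hK, α, hα, h1⟩ := H1
  obtain ⟨lam, φ₀, hlam, hφ₀, hL0, hperp⟩ := H4
  set S : Set ℝ := {k | 0 < k ∧ ∀ U : H, 0 ≤ ⟪L k U, U⟫} with hSdef
  have hKS : K ∈ S := by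
    refine ⟨hK, fun U => le_trans ?_ (h1 K (by rw [abs_of_pos hK]) U)⟩
    positivity
  have hSne : S.Nonempty := ⟨K, hKS⟩
  have hSbd : BddBelow S := ⟨0, fun k hk => hk.1.le⟩
  set k₀ := sInf S with hk₀def
  have hLc : Continuous L := hL.continuous
  -- continuity of the quadratic form in k, for fixed U
  have hcont : ∀ U : H, Continuous fun k => ⟪L k U, U⟫ := by
    intro U
    have h1 : Continuous fun k => L k U :=
      ((ContinuousLinearMap.apply ℝ H U).continuous).comp hLc
    exact h1.inner continuous_const
  -- k₀ > 0
  have hg0 : ⟪L 0 φ₀, φ₀⟫ < 0 := by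
    rw [hL0, real_inner_smul_left, real_inner_self_eq_norm_sq]
    have h0 : 0 < ‖φ₀‖ := norm_pos_iff.2 hφ₀
    have := mul_pos hlam (pow_pos h0 2)
    linarith
  have hev : ∀ᶠ k in nhds (0 : ℝ), ⟪L k φ₀, φ₀⟫ < 0 :=
    ((hcont φ₀).continuousAt).eventually_lt continuousAt_const hg0
  obtain ⟨ε, hε, hball⟩ := Metric.eventually_nhds_iff.1 hev
  have hk₀pos : 0 < k₀ := by
    have : ε ≤ k₀ := by
      apply le_csInf hSne
      intro k hk
      by_contra hlt
      push_neg at hlt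
      have : ⟪L k φ₀, φ₀⟫ < 0 := hball (by
        rw [Real.dist_eq, sub_zero, abs_of_pos hk.1]; exact hlt)
      exact absurd (hk.2 φ₀) (not_le.2 this)
    linarith
  -- L k₀ is nonnegative
  have hnonneg : ∀ U : H, 0 ≤ ⟪L k₀ U, U⟫ := by
    intro U
    by_contra hneg
    push_neg at hneg
    have hev2 : ∀ᶠ k in nhds k₀, ⟪L k U, U⟫ < 0 :=
      ((hcont U).continuousAt).eventually_lt continuousAt_const hneg
    obtain ⟨δ, hδ, hball2⟩ := Metric.eventually_nhds_iff.1 hev2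
    obtain ⟨k, hkS, hklt⟩ := (csInf_lt_iff hSbd hSne).1 (by linarith : sInf S < k₀ + δ)
    have hk₀le : k₀ ≤ k := csInf_le hSbd hkS
    have : ⟪L k U, U⟫ < 0 := hball2 (by
      rw [Real.dist_eq, abs_of_nonneg (by linarith)]; linarith)
    exact absurd (hkS.2 U) (not_le.2 this)
  set A := L k₀ with hAdef
  -- almost-kernel unit vectors
  have hδex : ∀ δ : ℝ, 0 < δ → ∃ U : H, ‖U‖ = 1 ∧ ⟪A U, U⟫ < δ := by
    intro δ hδ
    obtain ⟨η, hη, hηball⟩ := Metric.continuousAt_iff.1 (hLc.continuousAt (x := k₀)) δ hδ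
    set k := max (k₀ / 2) (k₀ - η / 2) with hkdef
    have hkpos : 0 < k := lt_of_lt_of_le (by linarith) (le_max_left _ _)
    have hklt : k < k₀ := max_lt (by linarith) (by linarith)
    have hkdist : dist k k₀ < η := by
      rw [Real.dist_eq, abs_of_nonpos (by linarith)]
      have : k₀ - η / 2 ≤ k := le_max_right _ _
      linarith
    have hnorm : ‖L k - A‖ < δ := by
      have := hηball hkdist
      rwa [dist_eq_norm] at this
    have hknotS : k ∉ S := by
      intro hkS
      exact absurd (csInf_le hSbd hkS) (not_le.2 hklt)
    rw [hSdef] at hknotS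
    simp only [Set.mem_setOf_eq, not_and, not_forall, not_le] at hknotS
    obtain ⟨U', hU'⟩ := hknotS hkpos
    have hU'ne : U' ≠ 0 := by
      intro h
      rw [h] at hU'
      simp at hU'
    have hU'pos : 0 < ‖U'‖ := norm_pos_iff.2 hU'ne
    refine ⟨‖U'‖⁻¹ • U', norm_smul_inv_norm hU'ne, ?_⟩
    have hform : ⟪L k (‖U'‖⁻¹ • U'), ‖U'‖⁻¹ • U'⟫ < 0 := by
      rw [map_smul, real_inner_smul_left, real_inner_smul_right]
      have h2 : 0 < ‖U'‖⁻¹ := by positivity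
      have h3 : 0 < ‖U'‖⁻¹ * ‖U'‖⁻¹ := mul_pos h2 h2
      nlinarith [mul_pos h3 (neg_pos.2 hU')]
    set U := ‖U'‖⁻¹ • U'
    have hUnorm : ‖U‖ = 1 := norm_smul_inv_norm hU'ne
    have hdiff : ⟪A U, U⟫ - ⟪L k U, U⟫ = ⟪(A - L k) U, U⟫ := by
      rw [ContinuousLinearMap.sub_apply, inner_sub_left]
    have hbound : ⟪(A - L k) U, U⟫ ≤ ‖A - L k‖ := by
      calc ⟪(A - L k) U, U⟫ ≤ ‖(A - L k) U‖ * ‖U‖ := real_inner_le_norm _ _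
        _ ≤ (‖A - L k‖ * ‖U‖) * ‖U‖ := by gcongr; exact (A - L k).le_opNorm _
        _ = ‖A - L k‖ := by rw [hUnorm]; ring
    have hALk : ‖A - L k‖ = ‖L k - A‖ := norm_sub_rev _ _
    linarith
  -- choose the sequence
  choose Un hUnorm hUform using fun n : ℕ => hδex (1 / (n + 1)) (by positivity)
  have hεnonneg : ∀ n, 0 ≤ ⟪A (Un n), Un n⟫ := fun n => hnonneg (Un n)
  have hεtendsto : Filter.Tendsto (fun n => ⟪A (Un n), Un n⟫) Filter.atTop (nhds 0) := by
    apply squeeze_zero hεnonneg (fun n => (hUform n).le)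
    exact tendsto_one_div_add_atTop_nhds_zero_nat
  have hAsym : ∀ U V : H, ⟪A U, V⟫ = ⟪U, A V⟫ := hsym k₀
  have hAUn : Filter.Tendsto (fun n => A (Un n)) Filter.atTop (nhds 0) := by
    rw [tendsto_zero_iff_norm_tendsto_zero]
    have hb : ∀ n, ‖A (Un n)‖ ≤ Real.sqrt (‖A‖ * ⟪A (Un n), Un n⟫) := by
      intro n
      rw [← Real.sqrt_sq (norm_nonneg _)]
      exact Real.sqrt_le_sqrt (nonneg_form_norm_sq_le A hAsym hnonneg (Un n))
    apply squeeze_zero (fun n => norm_nonneg _) hb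
    have h2 : Filter.Tendsto (fun n => ‖A‖ * ⟪A (Un n), Un n⟫) Filter.atTop (nhds 0) := by
      have := hεtendsto.const_mul ‖A‖
      simpa using this
    have h3 := (Real.continuous_sqrt.tendsto 0).comp h2
    rw [Real.sqrt_zero] at h3
    exact h3
  -- decompose at k₀
  obtain ⟨T, C, hTC, hTsym, ⟨c, hc, hcoer⟩, hCcomp⟩ := H2 k₀ (ne_of_gt hk₀pos)
  -- compactness: extract convergent subsequence of C (Un n)
  obtain ⟨Kc, hKc, hKcsub⟩ :=
    IsCompactOperator.image_closedBall_subset_compact (f := (C : H →ₗ[ℝ] H)) hCcomp 1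
  have hmem : ∀ n, C (Un n) ∈ Kc := by
    intro n
    apply hKcsub
    exact ⟨Un n, by simp [Metric.mem_closedBall, hUnorm n], rfl⟩
  obtain ⟨V, hVK, φ, hφmono, hCUφ⟩ := hKc.tendsto_subseq hmem
  -- T (Un (φ n)) converges
  have hAUφ : Filter.Tendsto (fun n => A (Un (φ n))) Filter.atTop (nhds 0) :=
    hAUn.comp hφmono.tendsto_atTop
  have hTeq : ∀ X : H, T X = A X - C X := by
    intro X
    rw [hAdef, hTC]
    simp
  have hTUφ : Filter.Tendsto (fun n => T (Un (φ n))) Filter.atTop (nhds (0 - V)) := by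
    simp only [hTeq]
    exact hAUφ.sub hCUφ
  -- coercivity gives Cauchy
  have hkey : ∀ X : H, c * ‖X‖ ≤ ‖T X‖ := by
    intro X
    rcases eq_or_ne X 0 with h | h
    · simp [h]
    · have hXpos : 0 < ‖X‖ := norm_pos_iff.2 h
      have h1 := hcoer X
      have h2 : ⟪T X, X⟫ ≤ ‖T X‖ * ‖X‖ := real_inner_le_norm _ _
      nlinarith
  have hCauchy : CauchySeq fun n => Un (φ n) := by
    rw [Metric.cauchySeq_iff]
    intro e he
    obtain ⟨N, hN⟩ := Metric.cauchySeq_iff.1 hTUφ.cauchySeq (c * e) (by positivity)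
    refine ⟨N, fun m hm n hn => ?_⟩
    have h1 := hN m hm n hn
    have h2 : c * dist (Un (φ m)) (Un (φ n)) ≤ dist (T (Un (φ m))) (T (Un (φ n))) := by
      rw [dist_eq_norm, dist_eq_norm, ← map_sub]
      exact hkey _
    exact (mul_lt_mul_iff_right₀ hc).1 (lt_of_le_of_lt h2 h1)
  obtain ⟨Uinf, hUinf⟩ := cauchySeq_tendsto_of_complete hCauchy
  have hUinfnorm : ‖Uinf‖ = 1 := by
    have h1 : Filter.Tendsto (fun n => ‖Un (φ n)‖) Filter.atTop (nhds ‖Uinf‖) := hUinf.norm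
    have h2 : (fun n => ‖Un (φ n)‖) = fun _ => (1 : ℝ) := by
      funext n; exact hUnorm (φ n)
    rw [h2] at h1
    exact (tendsto_nhds_unique tendsto_const_nhds h1).symm
  have hUinfne : Uinf ≠ 0 := by
    intro h
    rw [h, norm_zero] at hUinfnorm
    norm_num at hUinfnorm
  have hAUinf : A Uinf = 0 := by
    have h1 : Filter.Tendsto (fun n => A (Un (φ n))) Filter.atTop (nhds (A Uinf)) :=
      (A.continuous.tendsto Uinf).comp hUinf
    exact tendsto_nhds_unique h1 hAUφ
  -- the perpendicular-kernel lemma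
  have hker_perp : ∀ X : H, L k₀ X = 0 → ⟪X, φ₀⟫ = 0 → X = 0 := by
    intro X hXker hXperp
    by_contra hX0
    have hf0 : ∀ k : ℝ, 0 ≤ k → k ≤ k₀ → ⟪L k X, X⟫ = 0 := by
      intro k h0 hk
      have h1 : ⟪L k X, X⟫ ≤ ⟪L k₀ X, X⟫ := H3mono k₀ k h0 hk X
      have h2 : ⟪L 0 X, X⟫ ≤ ⟪L k X, X⟫ := H3mono k 0 le_rfl h0 X
      have h3 : (0 : ℝ) ≤ ⟪L 0 X, X⟫ := hperp X hXperp
      have h4 : ⟪L k₀ X, X⟫ = 0 := by rw [hXker, inner_zero_left]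
      linarith
    have hd : HasDerivAt (fun k => ⟪L k X, X⟫) (⟪deriv L k₀ X, X⟫) k₀ := by
      have hdL : HasDerivAt L (deriv L k₀) k₀ :=
        ((hL.differentiable one_ne_zero) k₀).hasDerivAt
      have hpt : HasDerivAt (fun k => L k X) (deriv L k₀ X) k₀ := by
        have := hdL.clm_apply (hasDerivAt_const k₀ X)
        simpa using this
      have := hpt.inner ℝ (hasDerivAt_const k₀ X)
      simpa using this
    have hdpos : 0 < ⟪deriv L k₀ X, X⟫ := H3ker k₀ hk₀pos X hX0 hXker
    -- slope along the left filter
    have hslope := hasDerivAt_iff_tendsto_slope.1 hd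
    have hsub : nhdsWithin k₀ (Set.Iio k₀) ≤ nhdsWithin k₀ {k₀}ᶜ :=
      nhdsWithin_mono _ fun y hy => ne_of_lt hy
    have h2 : Filter.Tendsto (slope (fun k => ⟪L k X, X⟫) k₀)
        (nhdsWithin k₀ (Set.Iio k₀)) (nhds (⟪deriv L k₀ X, X⟫)) :=
      hslope.mono_left hsub
    have hev0 : ∀ᶠ y in nhdsWithin k₀ (Set.Iio k₀),
        slope (fun k => ⟪L k X, X⟫) k₀ y = 0 := by
      have h3 : ∀ᶠ y in nhdsWithin k₀ (Set.Iio k₀), 0 < y := by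
        apply eventually_nhdsWithin_of_eventually_nhds
        exact eventually_gt_nhds hk₀pos
      have h4 : ∀ᶠ y in nhdsWithin k₀ (Set.Iio k₀), y < k₀ :=
        eventually_mem_nhdsWithin.mono fun y hy => hy
      filter_upwards [h3, h4] with y hy1 hy2
      rw [slope_def_field, hf0 y hy1.le hy2.le, hf0 k₀ hk₀pos.le le_rfl]
      simp
    have h5 : Filter.Tendsto (slope (fun k => ⟪L k X, X⟫) k₀)
        (nhdsWithin k₀ (Set.Iio k₀)) (nhds 0) :=
      Filter.Tendsto.congr' (Filter.EventuallyEq.symm hev0) tendsto_const_nhds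
    have := tendsto_nhds_unique h2 h5
    linarith
  -- conclusion
  refine ⟨k₀, hk₀pos, hnonneg, ?_⟩
  have hUinfker : Uinf ∈ LinearMap.ker (L k₀ : H →ₗ[ℝ] H) := LinearMap.mem_ker.2 hAUinf
  apply finrank_eq_one (⟨Uinf, hUinfker⟩ : LinearMap.ker (L k₀ : H →ₗ[ℝ] H))
  · intro h
    exact hUinfne (congrArg Subtype.val h)
  · rintro ⟨w, hw⟩
    have hwker : L k₀ w = 0 := LinearMap.mem_ker.1 hw
    set a := ⟪Uinf, φ₀⟫ with ha
    set b := ⟪w, φ₀⟫ with hb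
    have haz : a ≠ 0 := by
      intro h
      exact hUinfne (hker_perp Uinf hAUinf h)
    have hWker : L k₀ (b • Uinf - a • w) = 0 := by
      rw [map_sub, map_smul, map_smul, hwker, hAUinf]
      simp
    have hWperp : ⟪b • Uinf - a • w, φ₀⟫ = 0 := by
      rw [inner_sub_left, real_inner_smul_left, real_inner_smul_left, ← ha, ← hb]
      ring
    have hW0 : b • Uinf - a • w = 0 := hker_perp _ hWker hWperp
    refine ⟨b / a, ?_⟩
    apply Subtype.ext
    show (b / a) • Uinf = w
    have h6 : b • Uinf = a • w := by
      rwa [sub_eq_zero] at hW0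
    rw [div_eq_mul_inv, mul_comm, ← smul_smul, h6, smul_smul, inv_mul_cancel₀ haz, one_smul]
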